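/- In the Gaussian model setup with μ ≠ 0, if ε > ‖μ‖_∞, then the sequence (g_n) is strictly increasing for all n ≥ 1. -/

import Mathlib

open Real MeasureTheory ProbabilityTheory Filter Topology

open scoped NNReal ENNReal

/-! ### Auxiliary definitions and lemmas -/

/-- Standard normal pdf. -/
noncomputable def stdpdf (x : ℝ) : ℝ := (Real.sqrt (2*Real.pi))⁻¹ * Real.exp (-(x^2)/2)

lemma stdpdf_cont : Continuous stdpdf := by
  unfold stdpdf; fun_prop

lemma stdpdf_anti {x y : ℝ} (h0 : 0 ≤ x) (hxy : x ≤ y) : stdpdf y ≤ stdpdf x := by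
  unfold stdpdf
  have := Real.exp_le_exp.mpr (show -(y^2)/2 ≤ -(x^2)/2 by nlinarith)
  have hs : (0:ℝ) ≤ (Real.sqrt (2*Real.pi))⁻¹ := by positivity
  nlinarith

lemma stdpdf_strict_anti {x y : ℝ} (h0 : 0 ≤ x) (hxy : x < y) : stdpdf y < stdpdf x := by
  unfold stdpdf
  have h := Real.exp_lt_exp.mpr (show -(y^2)/2 < -(x^2)/2 by nlinarith)
  have hs : (0:ℝ) < (Real.sqrt (2*Real.pi))⁻¹ := by
    have := Real.pi_pos; positivity
  nlinarith

/-- Antiderivative of the standard normal pdf, vanishing at `0`. -/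
noncomputable def Lam (y : ℝ) : ℝ := ∫ x in (0:ℝ)..y, stdpdf x

lemma hasDerivAt_Lam (y : ℝ) : HasDerivAt Lam (stdpdf y) y := by
  apply intervalIntegral.integral_hasDerivAt_right
  · exact stdpdf_cont.intervalIntegrable _ _
  · exact stdpdf_cont.stronglyMeasurable.stronglyMeasurableAtFilter
  · exact stdpdf_cont.continuousAt

lemma Lam_neg (y : ℝ) : Lam (-y) = - Lam y := by
  have h2 : ∀ x, stdpdf (-x) = stdpdf x := by intro x; unfold stdpdf; ring_nf
  have h : ∫ x in (0:ℝ)..y, stdpdf x = ∫ x in (-y)..(0:ℝ), stdpdf x := by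
    have := intervalIntegral.integral_comp_neg (a := 0) (b := y) stdpdf
    simp only [h2, neg_zero] at this
    simpa using this
  rw [Lam, Lam, intervalIntegral.integral_symm, ← h]

lemma intervalIntegral_stdpdf (c d : ℝ) : ∫ x in c..d, stdpdf x = Lam d - Lam c := by
  rw [Lam, Lam, ← intervalIntegral.integral_interval_sub_left
    (stdpdf_cont.intervalIntegrable 0 d) (stdpdf_cont.intervalIntegrable 0 c)]

lemma gaussianPDFReal_eq (m : ℝ) (v : ℝ≥0) (hv : v ≠ 0) (x : ℝ) :
    gaussianPDFReal m v x = (Real.sqrt v)⁻¹ * stdpdf ((x - m) / Real.sqrt v) := by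
  have hv0 : (0:ℝ) < (v:ℝ) := by positivity
  have hs : (0:ℝ) < Real.sqrt v := Real.sqrt_pos.mpr hv0
  rw [gaussianPDFReal, stdpdf]
  rw [show (2 * Real.pi * (v:ℝ)) = (2*Real.pi) * (v:ℝ) by ring,
    Real.sqrt_mul (by positivity) (v:ℝ)]
  have hsq : (Real.sqrt v)^2 = (v:ℝ) := Real.sq_sqrt hv0.le
  rw [div_pow, hsq]
  rw [mul_inv]
  rw [show -((x - m) ^ 2 / (v:ℝ)) / 2 = -(x - m) ^ 2 / (2 * (v:ℝ)) by ring]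
  ring

lemma integral_gaussianPDFReal_eq (m : ℝ) (v : ℝ≥0) (hv : v ≠ 0) (a b : ℝ) :
    ∫ x in a..b, gaussianPDFReal m v x
      = Lam ((b - m) / Real.sqrt v) - Lam ((a - m) / Real.sqrt v) := by
  have hv0 : (0:ℝ) < (v:ℝ) := by positivity
  have hs : (0:ℝ) < Real.sqrt v := Real.sqrt_pos.mpr hv0
  calc ∫ x in a..b, gaussianPDFReal m v x
      = ∫ x in a..b, (Real.sqrt v)⁻¹ * stdpdf ((x - m) / Real.sqrt v) := by
        refine intervalIntegral.integral_congr fun x _ => gaussianPDFReal_eq m v hv x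
    _ = (Real.sqrt v)⁻¹ * ∫ x in a..b, stdpdf ((x - m) / Real.sqrt v) :=
        intervalIntegral.integral_const_mul _ _
    _ = (Real.sqrt v)⁻¹ * ∫ y in (a-m)..(b-m), stdpdf (y / Real.sqrt v) := by
        rw [intervalIntegral.integral_comp_sub_right (fun y => stdpdf (y / Real.sqrt v)) m]
    _ = (Real.sqrt v)⁻¹ *
        (Real.sqrt v • ∫ y in ((a-m)/Real.sqrt v)..((b-m)/Real.sqrt v), stdpdf y) := by
        rw [intervalIntegral.integral_comp_div stdpdf hs.ne']
    _ = Lam ((b - m) / Real.sqrt v) - Lam ((a - m) / Real.sqrt v) := by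
        rw [intervalIntegral_stdpdf, smul_eq_mul, ← mul_assoc, inv_mul_cancel₀ hs.ne', one_mul]

/-- The integrand appearing in `gaussGap`, as a function of one coordinate. -/
noncomputable def phifun (ε x : ℝ) : ℝ := Real.sign x - Real.sign (x - ε * Real.sign x)

lemma measurable_realSign : Measurable Real.sign := by
  have : Real.sign = fun r => if r < 0 then (-1:ℝ) else if 0 < r then 1 else 0 := by
    funext r; rw [Real.sign]
  rw [this]
  exact Measurable.ite (measurableSet_lt measurable_id measurable_const) measurable_const
    (Measurable.ite (measurableSet_lt measurable_const measurable_id) measurable_const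
      measurable_const)

lemma measurable_phifun (ε : ℝ) : Measurable (phifun ε) := by
  unfold phifun
  exact (measurable_realSign).sub
    (measurable_realSign.comp ((measurable_id.sub ((measurable_realSign).const_mul ε))))

lemma abs_sign_le (x : ℝ) : |Real.sign x| ≤ 1 := by
  rcases Real.sign_apply_eq x with h | h | h <;> rw [h] <;> norm_num

lemma abs_phifun_le (ε x : ℝ) : |phifun ε x| ≤ 2 := by
  unfold phifun
  calc |Real.sign x - Real.sign (x - ε * Real.sign x)|
      ≤ |Real.sign x| + |Real.sign (x - ε * Real.sign x)| := abs_sub _ _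
    _ ≤ 1 + 1 := add_le_add (abs_sign_le _) (abs_sign_le _)
    _ = 2 := by norm_num

lemma phifun_eq {ε : ℝ} (hε : 0 < ε) {x : ℝ} (hx1 : x ≠ ε) (hx2 : x ≠ -ε) :
    phifun ε x = (Set.Ioo (0:ℝ) ε).indicator (fun _ => (2:ℝ)) x
      + (Set.Ioo (-ε) (0:ℝ)).indicator (fun _ => (-2:ℝ)) x := by
  unfold phifun
  rcases lt_trichotomy x 0 with hx | hx | hx
  · rw [Real.sign_of_neg hx]
    have h1 : x ∉ Set.Ioo (0:ℝ) ε := by simp [Set.mem_Ioo]; intro h; linarith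
    rw [Set.indicator_of_notMem h1]
    rcases lt_trichotomy x (-ε) with h | h | h
    · have h2 : x ∉ Set.Ioo (-ε) (0:ℝ) := by simp [Set.mem_Ioo]; intro hh; linarith
      rw [Set.indicator_of_notMem h2, Real.sign_of_neg (by linarith : x - ε * (-1) < 0)]
      ring
    · exact absurd h hx2
    · have h2 : x ∈ Set.Ioo (-ε) (0:ℝ) := ⟨h, hx⟩
      rw [Set.indicator_of_mem h2, Real.sign_of_pos (by linarith : 0 < x - ε * (-1))]
      ring
  · subst hx
    simp [Real.sign_zero, Set.indicator_of_notMem, Set.mem_Ioo, hε, hε.le]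
  · rw [Real.sign_of_pos hx]
    have h2 : x ∉ Set.Ioo (-ε) (0:ℝ) := by simp [Set.mem_Ioo]; intro h; linarith
    rw [Set.indicator_of_notMem h2]
    rcases lt_trichotomy x ε with h | h | h
    · have h1 : x ∈ Set.Ioo (0:ℝ) ε := ⟨hx, h⟩
      rw [Set.indicator_of_mem h1, Real.sign_of_neg (by linarith : x - ε * 1 < 0)]
      ring
    · exact absurd h hx1
    · have h1 : x ∉ Set.Ioo (0:ℝ) ε := by simp [Set.mem_Ioo]; intro hh; linarith
      rw [Set.indicator_of_notMem h1, Real.sign_of_pos (by linarith : 0 < x - ε * 1)]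
      ring

/-- The quantity `Λ((ε−m)t) + 2Λ(mt) − Λ((ε+m)t)`; the expectation of `phifun` under
`N(m, 1/t²)` equals `2 * Jfun ε m t`. -/
noncomputable def Jfun (ε m t : ℝ) : ℝ := Lam ((ε - m)*t) + 2 * Lam (m*t) - Lam ((ε+m)*t)

lemma gauss_measure_Ioo (m : ℝ) {v : ℝ≥0} (hv : v ≠ 0) (a b : ℝ) (hab : a ≤ b) :
    ((gaussianReal m v) (Set.Ioo a b)).toReal
      = Lam ((b - m) / Real.sqrt v) - Lam ((a - m) / Real.sqrt v) := by
  rw [gaussianReal_apply_eq_integral m hv, ENNReal.toReal_ofReal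
    (setIntegral_nonneg measurableSet_Ioo fun x _ => gaussianPDFReal_nonneg m v x)]
  rw [← integral_Ioc_eq_integral_Ioo, ← intervalIntegral.integral_of_le hab,
    integral_gaussianPDFReal_eq m v hv a b]

lemma integral_phifun_gaussian {ε : ℝ} (hε : 0 < ε) (m : ℝ) {v : ℝ≥0} (hv : v ≠ 0) :
    ∫ x, phifun ε x ∂(gaussianReal m v) = 2 * Jfun ε m (Real.sqrt v)⁻¹ := by
  have hnull : (volume : Measure ℝ) ({ε, -ε} : Set ℝ) = 0 :=
    (Set.toFinite ({ε, -ε} : Set ℝ)).measure_zero _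
  have hg := gaussianReal_absolutelyContinuous m hv
  have hae : ∀ᵐ x ∂(gaussianReal m v), x ∉ ({ε, -ε} : Set ℝ) :=
    hg.ae_le (measure_eq_zero_iff_ae_notMem.mp hnull)
  have hcongr : ∫ x, phifun ε x ∂(gaussianReal m v)
      = ∫ x, ((Set.Ioo (0:ℝ) ε).indicator (fun _ => (2:ℝ)) x
          + (Set.Ioo (-ε) (0:ℝ)).indicator (fun _ => (-2:ℝ)) x) ∂(gaussianReal m v) := by
    refine integral_congr_ae ?_
    filter_upwards [hae] with x hx
    exact phifun_eq hε (fun h => hx (by simp [h])) (fun h => hx (by simp [h]))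
  rw [hcongr, integral_add
    ((integrable_const (2:ℝ)).indicator measurableSet_Ioo)
    ((integrable_const (-2:ℝ)).indicator measurableSet_Ioo),
    integral_indicator_const _ measurableSet_Ioo,
    integral_indicator_const _ measurableSet_Ioo,
    measureReal_def, measureReal_def,
    gauss_measure_Ioo m hv 0 ε hε.le,
    gauss_measure_Ioo m hv (-ε) 0 (by linarith)]
  have h1 : (0 - m) / Real.sqrt v = -(m / Real.sqrt v) := by ring
  have h2 : (-ε - m) / Real.sqrt v = -((ε + m) / Real.sqrt v) := by ring
  rw [h1, h2, Lam_neg, Lam_neg, Jfun]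
  rw [div_eq_mul_inv, div_eq_mul_inv, div_eq_mul_inv]
  simp only [smul_eq_mul]
  ring

lemma hasDerivAt_Jfun (ε m t : ℝ) :
    HasDerivAt (Jfun ε m)
      ((ε - m) * stdpdf ((ε - m)*t) + 2 * (m * stdpdf (m*t)) - (ε + m) * stdpdf ((ε+m)*t)) t := by
  have h1 : HasDerivAt (fun t => Lam ((ε - m)*t)) ((ε - m) * stdpdf ((ε - m)*t)) t := by
    have := (hasDerivAt_Lam ((ε - m)*t)).comp t ((hasDerivAt_id t).const_mul (ε - m))
    simpa [Function.comp_def, mul_comm] using this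
  have h2 : HasDerivAt (fun t => Lam (m*t)) (m * stdpdf (m*t)) t := by
    have := (hasDerivAt_Lam (m*t)).comp t ((hasDerivAt_id t).const_mul m)
    simpa [Function.comp_def, mul_comm] using this
  have h3 : HasDerivAt (fun t => Lam ((ε + m)*t)) ((ε + m) * stdpdf ((ε + m)*t)) t := by
    have := (hasDerivAt_Lam ((ε + m)*t)).comp t ((hasDerivAt_id t).const_mul (ε + m))
    simpa [Function.comp_def, mul_comm] using this
  exact (h1.add (h2.const_mul 2)).sub h3

lemma Jfun_strictMono {ε m : ℝ} (hε : 0 < ε) (hm0 : 0 < m) (hm : m < ε)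
    {t1 t2 : ℝ} (ht1 : 0 < t1) (ht : t1 < t2) : Jfun ε m t1 < Jfun ε m t2 := by
  have key : StrictMonoOn (Jfun ε m) (Set.Ici (0:ℝ)) := by
    apply strictMonoOn_of_deriv_pos (convex_Ici 0)
    · exact fun x _ => (hasDerivAt_Jfun ε m x).continuousAt.continuousWithinAt
    · intro t htmem
      rw [interior_Ici] at htmem
      have ht0 : 0 < t := htmem
      rw [(hasDerivAt_Jfun ε m t).deriv]
      have hA : (0:ℝ) < ε - m := by linarith
      have h1 : (ε - m) * stdpdf ((ε + m) * t) ≤ (ε - m) * stdpdf ((ε - m) * t) := by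
        apply mul_le_mul_of_nonneg_left _ hA.le
        exact stdpdf_anti (by positivity) (by nlinarith)
      have h2 : m * stdpdf ((ε + m) * t) < m * stdpdf (m * t) := by
        apply mul_lt_mul_of_pos_left _ hm0
        exact stdpdf_strict_anti (by positivity) (by nlinarith)
      nlinarith
  exact key (Set.mem_Ici.mpr ht1.le) (Set.mem_Ici.mpr (by linarith)) ht

lemma pi_map_eval {d : ℕ} (ν : Fin d → Measure ℝ) [∀ j, IsProbabilityMeasure (ν j)] (i : Fin d) :
    (Measure.pi ν).map (Function.eval i) = ν i := by
  ext s hs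
  rw [Measure.map_apply (measurable_pi_apply i) hs, Set.eval_preimage, Measure.pi_pi]
  rw [Finset.prod_eq_single i (fun j _ hj => by simp [Function.update_of_ne hj])
    (fun h => absurd (Finset.mem_univ i) h)]
  simp

lemma integral_eval {d : ℕ} (ν : Fin d → Measure ℝ) [∀ j, IsProbabilityMeasure (ν j)]
    (i : Fin d) (φ : ℝ → ℝ) (hφ : Measurable φ) :
    ∫ u : Fin d → ℝ, φ (u i) ∂(Measure.pi ν) = ∫ x, φ x ∂(ν i) := by
  conv_rhs => rw [← pi_map_eval ν i]
  rw [integral_map (measurable_pi_apply i).aemeasurable hφ.stronglyMeasurable.aestronglyMeasurable]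

/-! ### Main definitions -/

/-- Generalization gap `g_n = W · E[⟨sign(u) − sign(u − ε·sign(u)), μ⟩]` in the Gaussian
model, where `u` has independent coordinates `u(j) ~ N(μ(j), σ(j)²/n)`. -/
noncomputable def gaussGap (d : ℕ) (W ε : ℝ) (μ σ : Fin d → ℝ) (n : ℕ) : ℝ :=
  W * ∫ u : Fin d → ℝ,
      (∑ j, (Real.sign (u j) - Real.sign (u j - ε * Real.sign (u j))) * μ j)
    ∂(Measure.pi fun j => gaussianReal (μ j) (Real.toNNReal ((σ j) ^ 2 / n)))

lemma gaussGap_sum (d : ℕ) (W ε : ℝ) (μ σ : Fin d → ℝ) (n : ℕ) :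
    gaussGap d W ε μ σ n
    = W * ∑ j, (∫ x, phifun ε x ∂(gaussianReal (μ j) (Real.toNNReal ((σ j) ^ 2 / n)))) * μ j := by
  rw [gaussGap]
  congr 1
  have hint : ∀ j : Fin d, Integrable (fun u : Fin d → ℝ => phifun ε (u j) * μ j)
      (Measure.pi fun j => gaussianReal (μ j) (Real.toNNReal ((σ j) ^ 2 / n))) := by
    intro j
    apply Integrable.mono' (integrable_const (2 * |μ j|))
    · exact (((measurable_phifun ε).comp (measurable_pi_apply j)).mul_const
        (μ j)).aestronglyMeasurable
    · refine ae_of_all _ fun u => ?_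
      rw [norm_mul, Real.norm_eq_abs, Real.norm_eq_abs]
      exact mul_le_mul_of_nonneg_right (abs_phifun_le ε (u j)) (abs_nonneg _)
  calc ∫ u : Fin d → ℝ, (∑ j, (Real.sign (u j) - Real.sign (u j - ε * Real.sign (u j))) * μ j)
        ∂(Measure.pi fun j => gaussianReal (μ j) (Real.toNNReal ((σ j) ^ 2 / n)))
      = ∑ j, ∫ u : Fin d → ℝ, phifun ε (u j) * μ j
        ∂(Measure.pi fun j => gaussianReal (μ j) (Real.toNNReal ((σ j) ^ 2 / n))) := by
        exact integral_finset_sum Finset.univ fun j _ => hint j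
    _ = ∑ j, (∫ x, phifun ε x ∂(gaussianReal (μ j) (Real.toNNReal ((σ j) ^ 2 / n)))) * μ j := by
        refine Finset.sum_congr rfl fun j _ => ?_
        rw [integral_mul_const, integral_eval _ j (phifun ε) (measurable_phifun ε)]

/-- In the strong adversary regime `ε > ‖μ‖_∞` (i.e. `ε > μ(j)` for every `j`, as `μ ≥ 0`),
the generalization gap is strictly increasing for all `n ≥ 1`. -/
theorem gaussGap_strong_adversary (d : ℕ) (W ε : ℝ) (μ σ : Fin d → ℝ)
    (hW : 0 < W) (hε : 0 < ε) (hμ : ∀ j, 0 ≤ μ j) (hσ : ∀ j, 0 < σ j)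
    (hμne : μ ≠ 0) (hstrong : ∀ j, μ j < ε) :
    ∀ m n : ℕ, 1 ≤ m → m < n →
      gaussGap d W ε μ σ m < gaussGap d W ε μ σ n := by
  intro m n hm hmn
  have hm0 : (0:ℝ) < (m:ℝ) := by exact_mod_cast hm
  have hn0 : (0:ℝ) < (n:ℝ) := lt_trans hm0 (by exact_mod_cast hmn)
  have hmncast : (m:ℝ) < (n:ℝ) := by exact_mod_cast hmn
  -- variances are nonzero
  have hpos : ∀ (j : Fin d) (k : ℕ), 0 < (k:ℝ) → 0 < (σ j) ^ 2 / k :=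
    fun j k hk => div_pos (pow_pos (hσ j) 2) hk
  rw [gaussGap_sum, gaussGap_sum]
  apply mul_lt_mul_of_pos_left _ hW
  -- rewrite each integral via `Jfun`
  have hcoe : ∀ (k : ℕ) (j : Fin d), 0 < (k:ℝ) →
      ((Real.toNNReal ((σ j) ^ 2 / k) : ℝ≥0) : ℝ) = (σ j) ^ 2 / k := by
    intro k j hk
    exact Real.coe_toNNReal _ (by positivity)
  have hval : ∀ (k : ℕ), 0 < (k:ℝ) → ∀ j : Fin d,
      (∫ x, phifun ε x ∂(gaussianReal (μ j) (Real.toNNReal ((σ j) ^ 2 / k)))) * μ j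
        = 2 * Jfun ε (μ j) (Real.sqrt ((σ j) ^ 2 / k))⁻¹ * μ j := by
    intro k hk j
    rw [integral_phifun_gaussian hε (μ j) (ne_of_gt (Real.toNNReal_pos.mpr (hpos j k hk)))]
    rw [hcoe k j hk]
  simp only [hval m hm0, hval n hn0]
  -- strict monotonicity of the arguments
  have harg : ∀ j : Fin d,
      (Real.sqrt ((σ j) ^ 2 / m))⁻¹ < (Real.sqrt ((σ j) ^ 2 / n))⁻¹ ∧
      0 < (Real.sqrt ((σ j) ^ 2 / m))⁻¹ := by
    intro j
    have h1 : (0:ℝ) < (σ j) ^ 2 / n := hpos j n hn0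
    have h2 : (σ j) ^ 2 / n < (σ j) ^ 2 / m :=
      div_lt_div_of_pos_left (pow_pos (hσ j) 2) hm0 hmncast
    have hs1 : 0 < Real.sqrt ((σ j) ^ 2 / n) := Real.sqrt_pos.mpr h1
    have hs2 : Real.sqrt ((σ j) ^ 2 / n) < Real.sqrt ((σ j) ^ 2 / m) :=
      Real.sqrt_lt_sqrt h1.le h2
    constructor
    · exact inv_strictAnti₀ hs1 hs2
    · exact inv_pos.mpr (Real.sqrt_pos.mpr (hpos j m hm0))
  -- compare the sums termwise
  apply Finset.sum_lt_sum
  · intro j _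
    rcases eq_or_lt_of_le (hμ j) with h | h
    · rw [← h]; simp
    · apply le_of_lt
      apply mul_lt_mul_of_pos_right _ h
      have := Jfun_strictMono hε h (hstrong j) (harg j).2 (harg j).1
      linarith
  · obtain ⟨j, hj⟩ := Function.ne_iff.mp hμne
    refine ⟨j, Finset.mem_univ j, ?_⟩
    have h : 0 < μ j := lt_of_le_of_ne (hμ j) (by simpa using Ne.symm hj)
    apply mul_lt_mul_of_pos_right _ h
    have := Jfun_strictMono hε h (hstrong j) (harg j).2 (harg j).1
    linarith
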